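/- Let Y ∈ ℤ^n and let B be a rational subspace of ℝ^n of dimension e with a basis X₁,…,X_e consisting of vectors of ℤ^n. If ‖Y ∧ X₁ ∧ ⋯ ∧ X_e‖ < 1, i.e. if the determinant of the (e+1)×(e+1) Gram matrix of the vectors (Y, X₁, …, X_e) is strictly less than 1, then Y ∈ B. -/

import Mathlib

noncomputable section

open Finset Module

/-- A vector of `ℝⁿ` with integer coordinates. -/
def IsIntVec {n : ℕ} (v : EuclideanSpace ℝ (Fin n)) : Prop :=
  ∀ i, ∃ z : ℤ, v i = (z : ℝ)

/-- A rational subspace of `ℝⁿ`: one spanned by vectors with rational coordinates. -/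
def IsRationalSubspace {n : ℕ} (B : Submodule ℝ (EuclideanSpace ℝ (Fin n))) : Prop :=
  ∃ s : Set (EuclideanSpace ℝ (Fin n)),
    (∀ v ∈ s, ∀ i, ∃ q : ℚ, v i = (q : ℝ)) ∧ Submodule.span ℝ s = B

/-- `A` is `(e,j)`-irrational: every rational subspace `B` of dimension `e` satisfies
`dim (A ⊓ B) < j + g(dim A, e, n)` where `g(d,e,n) = max 0 (d+e-n)`. -/
def IsIrrational {n : ℕ} (A : Submodule ℝ (EuclideanSpace ℝ (Fin n))) (e j : ℕ) : Prop :=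
  ∀ B : Submodule ℝ (EuclideanSpace ℝ (Fin n)),
    IsRationalSubspace B → finrank ℝ B = e →
      finrank ℝ ↥(A ⊓ B) < j + (finrank ℝ A + e - n)

/-- The angle `ω(X,Y) = ‖X∧Y‖ / (‖X‖·‖Y‖)`. -/
def omegaAngle {n : ℕ} (X Y : EuclideanSpace ℝ (Fin n)) : ℝ :=
  Real.sqrt (‖X‖ ^ 2 * ‖Y‖ ^ 2 - (inner ℝ X Y : ℝ) ^ 2) / (‖X‖ * ‖Y‖)

/-- First angle `ψ₁(A,B)` between two subspaces. -/
def psiOne {n : ℕ} (A B : Submodule ℝ (EuclideanSpace ℝ (Fin n))) : ℝ :=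
  sInf {t | ∃ X ∈ A, X ≠ 0 ∧ ∃ Y ∈ B, Y ≠ 0 ∧ t = omegaAngle X Y}

/-- `‖X₁ ∧ ⋯ ∧ X_e‖`, as the square root of the Gram determinant. -/
def gramNorm {n e : ℕ} (X : Fin e → EuclideanSpace ℝ (Fin n)) : ℝ :=
  Real.sqrt (Matrix.of fun i j : Fin e => (inner ℝ (X i) (X j) : ℝ)).det

/-- `X` is a `ℤ`-basis of the lattice `B ∩ ℤⁿ`. -/
def IsZBasis {n e : ℕ} (X : Fin e → EuclideanSpace ℝ (Fin n))
    (B : Submodule ℝ (EuclideanSpace ℝ (Fin n))) : Prop :=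
  (∀ i, X i ∈ B) ∧ (∀ i, IsIntVec (X i)) ∧ LinearIndependent ℝ X ∧
    ∀ v ∈ B, IsIntVec v → ∃ c : Fin e → ℤ, v = ∑ i, (c i : ℝ) • X i

/-- The height `H(B)` of a rational subspace: the common value of `‖X₁ ∧ ⋯ ∧ X_e‖`
over `ℤ`-bases of the lattice `B ∩ ℤⁿ`. -/
def height {n : ℕ} (B : Submodule ℝ (EuclideanSpace ℝ (Fin n))) : ℝ :=
  sSup {h | ∃ e : ℕ, ∃ X : Fin e → EuclideanSpace ℝ (Fin n), IsZBasis X B ∧ h = gramNorm X}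

/-- The Diophantine exponent `μ_n(A|e)₁ ∈ ℝ ∪ {+∞}`. -/
def diophExp {n : ℕ} (A : Submodule ℝ (EuclideanSpace ℝ (Fin n))) (e : ℕ) : EReal :=
  sSup {x : EReal | ∃ μ : ℝ, x = (μ : ℝ) ∧ 0 < μ ∧
    {B : Submodule ℝ (EuclideanSpace ℝ (Fin n)) |
      IsRationalSubspace B ∧ finrank ℝ B = e ∧ psiOne A B ≤ height B ^ (-μ)}.Infinite}

/-- If `Y ∈ ℤⁿ`, `B` is a rational subspace of dimension `e` with a basis
`X₁,…,X_e` of integer vectors, and the Gram determinant of `(Y, X₁, …, X_e)` is `< 1`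
(i.e. `‖Y ∧ X₁ ∧ ⋯ ∧ X_e‖ < 1`), then `Y ∈ B`. -/
theorem statement10 (n e : ℕ) (Y : EuclideanSpace ℝ (Fin n)) (hY : IsIntVec Y)
    (B : Submodule ℝ (EuclideanSpace ℝ (Fin n))) (hB : IsRationalSubspace B)
    (hBe : finrank ℝ B = e)
    (X : Fin e → EuclideanSpace ℝ (Fin n))
    (hXB : ∀ i, X i ∈ B) (hXint : ∀ i, IsIntVec (X i))
    (hXli : LinearIndependent ℝ X) (hXspan : Submodule.span ℝ (Set.range X) = B)
    (hgram : (Matrix.of fun i j : Fin (e + 1) =>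
        (inner ℝ ((Fin.cons Y X : Fin (e + 1) → EuclideanSpace ℝ (Fin n)) i)
          ((Fin.cons Y X : Fin (e + 1) → EuclideanSpace ℝ (Fin n)) j) : ℝ)).det < 1) :
    Y ∈ B := by
  classical
  set V : Fin (e + 1) → EuclideanSpace ℝ (Fin n) := Fin.cons Y X with hVdef
  set G : Matrix (Fin (e + 1)) (Fin (e + 1)) ℝ :=
    Matrix.of fun i j => (inner ℝ (V i) (V j) : ℝ) with hGdef
  -- All entries of the family are integer vectors
  have hVint : ∀ i k, ∃ z : ℤ, V i k = (z : ℝ) := by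
    intro i
    refine Fin.cases ?_ ?_ i
    · exact hY
    · intro j; exact hXint j
  choose Z hZ using hVint
  -- The Gram matrix is the cast of an integer matrix
  set Gz : Matrix (Fin (e + 1)) (Fin (e + 1)) ℤ :=
    Matrix.of fun i j => ∑ k, Z i k * Z j k with hGzdef
  have hGcast : G = Gz.map (Int.cast : ℤ → ℝ) := by
    ext i j
    simp only [hGdef, hGzdef, Matrix.map_apply, Matrix.of_apply, PiLp.inner_apply,
      RCLike.inner_apply, starRingEnd_apply, star_trivial]
    push_cast
    exact Finset.sum_congr rfl fun k _ => by rw [hZ i k, hZ j k, mul_comm]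
  have hdetcast : G.det = (Gz.det : ℝ) := by
    rw [hGcast]
    exact (RingHom.map_det (Int.castRingHom ℝ) Gz).symm
  -- The Gram matrix is positive semidefinite, hence has nonnegative determinant
  set M : Matrix (Fin n) (Fin (e + 1)) ℝ := Matrix.of fun k i => V i k with hMdef
  have hGM : G = M.conjTranspose * M := by
    ext i j
    simp only [hGdef, hMdef, Matrix.mul_apply, Matrix.conjTranspose_apply, Matrix.of_apply,
      star_trivial, PiLp.inner_apply, RCLike.inner_apply, starRingEnd_apply]
    exact Finset.sum_congr rfl fun k _ => mul_comm _ _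
  have hpsd : G.PosSemidef := hGM ▸ Matrix.posSemidef_conjTranspose_mul_self M
  have hdetnn : 0 ≤ G.det := by
    rw [hpsd.isHermitian.det_eq_prod_eigenvalues]
    exact Finset.prod_nonneg fun i _ => hpsd.eigenvalues_nonneg i
  -- Hence the integer determinant is 0
  have hGz0 : Gz.det = 0 := by
    have h1 : (Gz.det : ℝ) < 1 := by rw [← hdetcast]; exact hgram
    have h0 : (0 : ℝ) ≤ (Gz.det : ℝ) := by rw [← hdetcast]; exact hdetnn
    have h1' : Gz.det < 1 := by exact_mod_cast h1
    have h0' : (0 : ℤ) ≤ Gz.det := by exact_mod_cast h0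
    omega
  have hGdet0 : G.det = 0 := by rw [hdetcast, hGz0, Int.cast_zero]
  -- Suppose Y ∉ B; then the family V is linearly independent
  by_contra hYB
  have hYspan : Y ∉ Submodule.span ℝ (Set.range X) := by rw [hXspan]; exact hYB
  have hVli : LinearIndependent ℝ V := linearIndependent_fin_cons.mpr ⟨hXli, hYspan⟩
  -- det = 0 gives a nonzero kernel vector
  obtain ⟨v, hv0, hvG⟩ := (Matrix.exists_mulVec_eq_zero_iff).mpr hGdet0
  -- The corresponding combination of the V i has zero norm
  set w : EuclideanSpace ℝ (Fin n) := ∑ i, v i • V i with hwdef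
  have hww : (inner ℝ w w : ℝ) = dotProduct v (G.mulVec v) := by
    simp only [hwdef, sum_inner, inner_sum, real_inner_smul_left, real_inner_smul_right,
      dotProduct, Matrix.mulVec, Matrix.of_apply, hGdef, Finset.mul_sum]
    exact Finset.sum_congr rfl fun i _ => Finset.sum_congr rfl fun j _ => by rw [real_inner_comm]; ring
  have hw0 : w = 0 := by
    rw [← inner_self_eq_zero (𝕜 := ℝ), hww, hvG, dotProduct_zero]
  have := (Fintype.linearIndependent_iff.mp hVli) v (by rw [← hwdef, hw0])
  exact hv0 (funext this)
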